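/- arXiv:1809.08329 — 5 statements merged into one kernel-verified Lean document; each statement's English description precedes it below -/
import Mathlib

section
/- Let $Q \subseteq E$ be a closed convex subset of a finite-dimensional normed space, $d$ a 1-strongly convex differentiable d.g.f. on $Q$ with Bregman divergence $V$, and $f : Q \to \mathbb{R}$ a convex subdifferentiable function. Let $h > 0$, $y \in Q$, and $z = \arg\min_{u \in Q}\{\langle h \nabla f(y), u \rangle + V(y, u)\}$. Then for every $x \in Q$: $h \langle \nabla f(y), y - x \rangle \leq \frac{h^2}{2}\|\nabla f(y)\|_*^2 + V(y, x) - V(z, x)$. -/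
theorem mirror_descent_lemma {E : Type*} [NormedAddCommGroup E] [NormedSpace ℝ E]
    [FiniteDimensional ℝ E]
    (Q : Set E) (hQc : IsClosed Q) (hQ : Convex ℝ Q)
    (d : E → ℝ) (D : E → E →L[ℝ] ℝ)
    (hdiff : ∀ w ∈ Q, HasFDerivAt d (D w) w)
    (hstr : ∀ u ∈ Q, ∀ v ∈ Q, ‖u - v‖^2 ≤ (D u - D v) (u - v))
    (V : E → E → ℝ) (hV : ∀ u v, V u v = d v - d u - D u (v - u))
    (f : E → ℝ) (hf : ConvexOn ℝ Q f)
    (y : E) (hy : y ∈ Q)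
    (p : E →L[ℝ] ℝ) (hp : ∀ u ∈ Q, f y + p (u - y) ≤ f u)
    (h : ℝ) (hh : 0 < h)
    (z : E) (hzQ : z ∈ Q)
    (hz : ∀ u ∈ Q, h * p z + V y z ≤ h * p u + V y u) :
    ∀ x ∈ Q, h * p (y - x) ≤ h^2 / 2 * ‖p‖^2 + V y x - V z x := by
  -- Strong convexity: V u v ≥ ½ ‖v - u‖²
  have hV2 : ∀ u ∈ Q, ∀ v ∈ Q, (1:ℝ)/2 * ‖v - u‖^2 ≤ d v - d u - D u (v - u) := by
    intro u hu v hv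
    set c : ℝ → E := fun t => u + t • (v - u) with hc
    have hcQ : ∀ t ∈ Set.Icc (0:ℝ) 1, c t ∈ Q := by
      intro t ht
      have : c t = (1 - t) • u + t • v := by
        simp [hc, smul_sub, sub_smul]; abel
      rw [this]
      exact hQ hu hv (by linarith [ht.2]) ht.1 (by ring)
    set g : ℝ → ℝ := fun t => d (c t) - t * (D u (v - u)) - t^2/2 * ‖v - u‖^2 with hg
    have hderiv : ∀ t ∈ Set.Icc (0:ℝ) 1,
        HasDerivAt g (D (c t) (v - u) - D u (v - u) - t * ‖v - u‖^2) t := by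
      intro t ht
      have hcd : HasDerivAt c (v - u) t := by
        simpa [hc] using ((hasDerivAt_id t).smul_const (v - u)).const_add u
      have h1 : HasDerivAt (fun t => d (c t)) (D (c t) (v - u)) t :=
        (hdiff (c t) (hcQ t ht)).comp_hasDerivAt t hcd
      have h2 : HasDerivAt (fun t : ℝ => t * (D u (v - u))) (D u (v - u)) t := by
        simpa using (hasDerivAt_id t).mul_const (D u (v - u))
      have h3 : HasDerivAt (fun t : ℝ => t^2/2 * ‖v - u‖^2) (t * ‖v - u‖^2) t := by
        have := ((hasDerivAt_pow 2 t).div_const 2).mul_const (‖v - u‖^2)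
        simpa [mul_comm, mul_assoc] using this
      exact (h1.sub h2).sub h3
    have hmono : MonotoneOn g (Set.Icc (0:ℝ) 1) := by
      apply monotoneOn_of_hasDerivWithinAt_nonneg (convex_Icc 0 1)
        (f' := fun t => D (c t) (v - u) - D u (v - u) - t * ‖v - u‖^2)
      · intro t ht
        exact (hderiv t ht).continuousAt.continuousWithinAt
      · intro t ht
        rw [interior_Icc] at ht
        exact (hderiv t (Set.mem_Icc_of_Ioo ht)).hasDerivWithinAt
      · intro t ht
        rw [interior_Icc] at ht
        have hkey := hstr (c t) (hcQ t (Set.mem_Icc_of_Ioo ht)) u hu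
        have hcu : c t - u = t • (v - u) := by simp [hc]
        rw [hcu] at hkey
        simp only [ContinuousLinearMap.sub_apply, map_smul, norm_smul, smul_eq_mul,
          Real.norm_eq_abs, abs_of_pos ht.1, mul_pow] at hkey
        nlinarith [ht.1, sq_nonneg ‖v - u‖]
    have := hmono (Set.left_mem_Icc.mpr zero_le_one) (Set.right_mem_Icc.mpr zero_le_one)
      zero_le_one
    simp only [hg, hc] at this
    norm_num at this
    rw [map_sub]
    linarith
  intro x hx
  -- first-order optimality at z
  set φ : E → ℝ := fun u => h * p u + d u - d y - D y (u - y) with hφdef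
  have hφd : HasFDerivAt φ (h • p + D z - D y) z := by
    have A : HasFDerivAt (fun u => h * p u) (h • p) z := p.hasFDerivAt.const_mul h
    have B : HasFDerivAt d (D z) z := hdiff z hzQ
    have C : HasFDerivAt (fun u => D y (u - y)) (D y) z := by
      have := (D y).hasFDerivAt (x := z)
      simpa [map_sub] using this.sub_const (D y y)
    exact ((A.add B).sub_const (d y)).sub C
  have hmin : IsLocalMinOn φ Q z := by
    have : IsMinOn φ Q z := by
      intro u hu
      have := hz u hu
      simp only [hV] at this
      simp only [hφdef, Set.mem_setOf_eq]
      linarith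
    exact this.localize
  have hcone : x - z ∈ posTangentConeAt Q z :=
    sub_mem_posTangentConeAt_of_segment_subset (hQ.segment_subset hzQ hx)
  have hopt := hmin.hasFDerivWithinAt_nonneg hφd.hasFDerivWithinAt hcone
  simp only [ContinuousLinearMap.add_apply, ContinuousLinearMap.sub_apply,
    ContinuousLinearMap.smul_apply, smul_eq_mul, map_sub] at hopt
  -- strong convexity at (y, z)
  have key2 := hV2 y hy z hzQ
  rw [map_sub] at key2
  -- Cauchy-Schwarz + AM-GM
  have key3 : p (y - z) ≤ ‖p‖ * ‖y - z‖ :=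
    le_trans (le_abs_self _) (by simpa [Real.norm_eq_abs] using p.le_opNorm (y - z))
  have key4 : h * (‖p‖ * ‖y - z‖) ≤ h^2/2 * ‖p‖^2 + 1/2 * ‖y - z‖^2 := by
    nlinarith [sq_nonneg (h * ‖p‖ - ‖y - z‖)]
  have hnorm : ‖z - y‖ = ‖y - z‖ := norm_sub_rev z y
  rw [hnorm] at key2
  have key3' : h * p (y - z) ≤ h * (‖p‖ * ‖y - z‖) :=
    mul_le_mul_of_nonneg_left key3 hh.le
  simp only [hV, map_sub]
  rw [map_sub] at key3'
  linarith [hopt, key2, key3', key4]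
end

section
/- Under the hypotheses of the Mirror Descent lemma, if additionally $f$ is convex, then for every $x \in Q$: $h(f(y) - f(x)) \leq \frac{h^2}{2}\|\nabla f(y)\|_*^2 + V(y, x) - V(z, x)$, where $z = \mathrm{Mirr}_y(h\nabla f(y))$. -/
open Set

/-- Strong convexity bound from gradient strong monotonicity, via a 1D argument. -/
lemma strong_conv_aux {E : Type*} [NormedAddCommGroup E] [NormedSpace ℝ E]
    (Q : Set E) (hQ : Convex ℝ Q)
    (d : E → ℝ) (D : E → E →L[ℝ] ℝ)
    (hdiff : ∀ w ∈ Q, HasFDerivAt d (D w) w)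
    (hstr : ∀ u ∈ Q, ∀ v ∈ Q, ‖u - v‖^2 ≤ (D u - D v) (u - v))
    (a : E) (ha : a ∈ Q) (b : E) (hb : b ∈ Q) :
    1/2 * ‖b - a‖^2 ≤ d b - d a - D a (b - a) := by
  set c : ℝ → E := fun t => a + t • (b - a) with hc
  have hmem : ∀ t ∈ Icc (0:ℝ) 1, c t ∈ Q := fun t ht => by
    have := hQ.segment_subset ha hb
    apply this
    rw [segment_eq_image']
    exact ⟨t, ht, rfl⟩
  set g : ℝ → ℝ := fun t => d (c t) - t * (D a (b - a)) - t^2/2 * ‖b - a‖^2 with hg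
  have hcderiv : ∀ t : ℝ, HasDerivAt c (b - a) t := by
    intro t
    have : HasDerivAt (fun t : ℝ => t • (b - a)) ((1:ℝ) • (b - a)) t :=
      (hasDerivAt_id t).smul_const (b - a)
    exact (by simpa using this : HasDerivAt (fun t : ℝ => t • (b - a)) (b - a) t).const_add a
  have hgderiv : ∀ t ∈ Icc (0:ℝ) 1,
      HasDerivAt g (D (c t) (b - a) - D a (b - a) - t * ‖b - a‖^2) t := by
    intro t ht
    have h1 : HasDerivAt (fun t => d (c t)) (D (c t) (b - a)) t :=
      (hdiff (c t) (hmem t ht)).comp_hasDerivAt t (hcderiv t)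
    have h2 : HasDerivAt (fun t : ℝ => t * (D a (b - a))) (D a (b - a)) t := by
      simpa using (hasDerivAt_id t).mul_const (D a (b - a))
    have h3 : HasDerivAt (fun t : ℝ => t^2/2 * ‖b - a‖^2) (t * ‖b - a‖^2) t := by
      have : HasDerivAt (fun t : ℝ => t^2/2) t t := by
        simpa using ((hasDerivAt_pow 2 t).div_const 2)
      simpa using this.mul_const (‖b - a‖^2)
    exact (h1.sub h2).sub h3
  have hderiv_nonneg : ∀ t ∈ Ioo (0:ℝ) 1,
      0 ≤ D (c t) (b - a) - D a (b - a) - t * ‖b - a‖^2 := by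
    intro t ht
    have hmemt : c t ∈ Q := hmem t ⟨ht.1.le, ht.2.le⟩
    have hs := hstr (c t) hmemt a ha
    have hca : c t - a = t • (b - a) := by simp [hc]
    rw [hca] at hs
    have hnorm : ‖t • (b - a)‖^2 = t^2 * ‖b - a‖^2 := by
      rw [norm_smul]
      simp [Real.norm_eq_abs, mul_pow, sq_abs]
    rw [hnorm] at hs
    have happ : (D (c t) - D a) (t • (b - a)) = t * ((D (c t)) (b - a) - D a (b - a)) := by
      rw [map_smul]; simp [ContinuousLinearMap.sub_apply, smul_eq_mul]
    rw [happ] at hs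
    have ht' : 0 < t := ht.1
    nlinarith [hs, ht']
  -- g is monotone on [0,1]
  have hmono : MonotoneOn g (Icc (0:ℝ) 1) := by
    apply monotoneOn_of_deriv_nonneg (convex_Icc 0 1)
    · exact fun t ht => ((hgderiv t ht).continuousAt).continuousWithinAt
    · intro t ht
      rw [interior_Icc] at ht
      exact ((hgderiv t ⟨ht.1.le, ht.2.le⟩).differentiableAt).differentiableWithinAt
    · intro t ht
      rw [interior_Icc] at ht
      rw [(hgderiv t ⟨ht.1.le, ht.2.le⟩).deriv]
      exact hderiv_nonneg t ht
  have h01 := hmono (left_mem_Icc.2 zero_le_one) (right_mem_Icc.2 zero_le_one) zero_le_one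
  have hc0 : c 0 = a := by simp [hc]
  have hc1 : c 1 = b := by simp [hc]
  simp only [hg, hc0, hc1] at h01
  norm_num at h01 ⊢
  linarith

theorem mirror_descent_lemma_function_values {E : Type*} [NormedAddCommGroup E] [NormedSpace ℝ E]
    [FiniteDimensional ℝ E]
    (Q : Set E) (hQc : IsClosed Q) (hQ : Convex ℝ Q)
    (d : E → ℝ) (D : E → E →L[ℝ] ℝ)
    (hdiff : ∀ w ∈ Q, HasFDerivAt d (D w) w)
    (hstr : ∀ u ∈ Q, ∀ v ∈ Q, ‖u - v‖^2 ≤ (D u - D v) (u - v))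
    (V : E → E → ℝ) (hV : ∀ u v, V u v = d v - d u - D u (v - u))
    (f : E → ℝ) (hf : ConvexOn ℝ Q f)
    (y : E) (hy : y ∈ Q)
    (p : E →L[ℝ] ℝ) (hp : ∀ u ∈ Q, f y + p (u - y) ≤ f u)
    (h : ℝ) (hh : 0 < h)
    (z : E) (hzQ : z ∈ Q)
    (hz : ∀ u ∈ Q, h * p z + V y z ≤ h * p u + V y u) :
    ∀ x ∈ Q, h * (f y - f x) ≤ h^2 / 2 * ‖p‖^2 + V y x - V z x := by
  intro x hx
  -- first-order optimality for z
  set g : E → ℝ := fun u => h * p u + d u - D y u with hgdef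
  have hge : ∀ u, h * p u + V y u = g u + (- d y + D y y) := by
    intro u
    simp only [hgdef, hV]
    rw [map_sub]
    ring
  have hmin : IsMinOn g Q z := by
    intro u hu
    have := hz u hu
    rw [hge u, hge z] at this
    simpa using this
  set G : E →L[ℝ] ℝ := h • p + D z - D y with hGdef
  have hgfd : HasFDerivAt g G z := by
    have h1 : HasFDerivAt (fun u => h * p u) (h • p) z := p.hasFDerivAt.const_mul h
    have h2 : HasFDerivAt d (D z) z := hdiff z hzQ
    have h3 : HasFDerivAt (fun u => D y u) (D y) z := (D y).hasFDerivAt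
    exact (h1.add h2).sub h3
  have htan : x - z ∈ posTangentConeAt Q z :=
    sub_mem_posTangentConeAt_of_segment_subset (hQ.segment_subset hzQ hx)
  have hfoc : 0 ≤ G (x - z) :=
    hmin.localize.hasFDerivWithinAt_nonneg hgfd.hasFDerivWithinAt htan
  have hGapp : G (x - z) = h * p (x - z) + D z (x - z) - D y (x - z) := by
    simp [hGdef]
  -- three-point identity
  have h3pt : D z (x - z) - D y (x - z) = V y x - V z x - V y z := by
    simp only [hV, map_sub]
    ring
  -- strong convexity: V y z ≥ 1/2 ‖z - y‖²
  have hsc : 1/2 * ‖z - y‖^2 ≤ V y z := by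
    rw [hV]
    exact strong_conv_aux Q hQ d D hdiff hstr y hy z hzQ
  -- convexity of f
  have hcvx : f y - f x ≤ p (y - x) := by
    have := hp x hx
    have hpx : p (x - y) = p x - p y := by rw [map_sub]
    have hpy : p (y - x) = p y - p x := by rw [map_sub]
    linarith [this, hpx ▸ this]
  -- Cauchy-Schwarz + AM-GM
  have hcs : h * p (y - z) ≤ h^2/2 * ‖p‖^2 + 1/2 * ‖z - y‖^2 := by
    have h1 : p (y - z) ≤ ‖p‖ * ‖y - z‖ := le_trans (le_abs_self _)
      (by simpa [Real.norm_eq_abs] using p.le_opNorm (y - z))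
    have h2 : ‖y - z‖ = ‖z - y‖ := norm_sub_rev _ _
    have h3 : h * p (y - z) ≤ h * (‖p‖ * ‖z - y‖) := by
      rw [← h2]; exact mul_le_mul_of_nonneg_left h1 hh.le
    nlinarith [sq_nonneg (h * ‖p‖ - ‖z - y‖)]
  -- assemble
  have hfoc' : 0 ≤ h * p (x - z) + (V y x - V z x - V y z) := by
    rw [hGapp] at hfoc; linarith [h3pt]
  have hkey : h * p (z - x) ≤ V y x - V z x - V y z := by
    have hneg : h * p (z - x) = - (h * p (x - z)) := by
      rw [show z - x = -(x - z) by abel, map_neg]; ring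
    rw [hneg]; linarith [hfoc']
  have hsum : h * p (y - x) = h * p (y - z) + h * p (z - x) := by
    have : p (y - x) = p (y - z) + p (z - x) := by simp only [map_sub]; ring
    rw [this]; ring
  have hA : h * (f y - f x) ≤ h * p (y - x) := mul_le_mul_of_nonneg_left hcvx hh.le
  linarith [hA, hsum, hcs, hkey]
end

section
/- Let $f_1, \dots, f_N$ and $g$ be convex functions on a closed convex set $Q$, each Lipschitz with constant $M$, let $x_* \in Q$ with $g(x_*) \leq 0$, let $\varepsilon > 0$, $h = \varepsilon / M^2$, and $V$ the Bregman divergence of a 1-strongly convex d.g.f. with $V(x^0, x_*) \leq \Theta_0^2$. Suppose a sequence $(x^k)_{k=0}^{N+N_J}$ is generated by steps $x^{k+1} = \mathrm{Mirr}_{x^k}(h \nabla f_{i(k)}(x^k))$ on $N$ productive steps (where $g(x^k) \leq \varepsilon$, indexed by $i(k) \in \{1,\dots,N\}$ bijectively) and $x^{k+1} = \mathrm{Mirr}_{x^k}(h \nabla g(x^k))$ on $N_J$ non-productive steps (where $g(x^k) > \varepsilon$). Then $\sum_{k \text{ productive}} (f_{i(k)}(x^k) - f_{i(k)}(x_*))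 \leq \frac{\varepsilon N}{2} + \frac{M^2 \Theta_0^2}{\varepsilon} - \frac{\varepsilon N_J}{2}$. -/
open Set Filter Topology

/-- Strong convexity lower bound on the Bregman divergence. -/
lemma aux_Vlb {E : Type*} [NormedAddCommGroup E] [NormedSpace ℝ E]
    (Q : Set E) (hQ : Convex ℝ Q)
    (d : E → ℝ) (D : E → E →L[ℝ] ℝ)
    (hdiff : ∀ w ∈ Q, HasFDerivAt d (D w) w)
    (hstr : ∀ u ∈ Q, ∀ v ∈ Q, ‖u - v‖^2 ≤ (D u - D v) (u - v)) :
    ∀ u ∈ Q, ∀ v ∈ Q, ‖v - u‖^2 / 2 ≤ d v - d u - D u (v - u) := by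
  intro u hu v hv
  set γ : ℝ → E := fun t => u + t • (v - u) with hγdef
  have hmem : ∀ t ∈ Icc (0:ℝ) 1, γ t ∈ Q := fun t ht => hQ.add_smul_sub_mem hu hv ht
  have hγ : ∀ t : ℝ, HasDerivAt γ (v - u) t := by
    intro t
    simpa [hγdef] using ((hasDerivAt_id t).smul_const (v - u)).const_add u
  set φ : ℝ → ℝ := fun t => d (γ t) - t * (D u (v - u)) - t^2/2 * ‖v - u‖^2 with hφdef
  have hφ' : ∀ t ∈ Icc (0:ℝ) 1,
      HasDerivAt φ (D (γ t) (v - u) - D u (v - u) - t * ‖v - u‖^2) t := by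
    intro t ht
    have h1 : HasDerivAt (fun t => d (γ t)) (D (γ t) (v - u)) t :=
      (hdiff _ (hmem t ht)).comp_hasDerivAt t (hγ t)
    have h2 : HasDerivAt (fun t : ℝ => t * (D u (v - u))) (D u (v - u)) t := by
      simpa using (hasDerivAt_id t).mul_const (D u (v - u))
    have h3 : HasDerivAt (fun t : ℝ => t^2/2 * ‖v - u‖^2) (t * ‖v - u‖^2) t := by
      have := ((hasDerivAt_pow 2 t).div_const 2).mul_const (‖v - u‖^2)
      refine this.congr_deriv ?_
      ring
    exact (h1.sub h2).sub h3
  have hmono : MonotoneOn φ (Icc (0:ℝ) 1) := by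
    apply monotoneOn_of_deriv_nonneg (convex_Icc 0 1)
    · exact fun t ht => ((hφ' t ht).continuousAt).continuousWithinAt
    · intro t ht
      rw [interior_Icc] at ht
      exact ((hφ' t (Ioo_subset_Icc_self ht)).differentiableAt).differentiableWithinAt
    · intro t ht
      rw [interior_Icc] at ht
      rw [(hφ' t (Ioo_subset_Icc_self ht)).deriv]
      have hs := hstr (γ t) (hmem t (Ioo_subset_Icc_self ht)) u hu
      have he : γ t - u = t • (v - u) := by simp [hγdef]
      rw [he] at hs
      have h1 : ‖t • (v - u)‖^2 = t^2 * ‖v - u‖^2 := by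
        rw [norm_smul, mul_pow, Real.norm_eq_abs, sq_abs]
      have h2 : (D (γ t) - D u) (t • (v - u)) = t * ((D (γ t)) (v - u) - (D u) (v - u)) := by
        simp only [ContinuousLinearMap.sub_apply, map_smul, smul_eq_mul]
      rw [h1, h2] at hs
      have ht0 : 0 < t := ht.1
      nlinarith
  have := hmono (left_mem_Icc.mpr zero_le_one) (right_mem_Icc.mpr zero_le_one) zero_le_one
  have hφ0 : φ 0 = d u := by simp [hφdef, hγdef]
  have hφ1 : φ 1 = d v - D u (v - u) - ‖v - u‖^2/2 := by simp [hφdef, hγdef]; ring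
  rw [hφ0, hφ1] at this
  linarith

/-- First-order optimality condition for the mirror step. -/
lemma aux_foc {E : Type*} [NormedAddCommGroup E] [NormedSpace ℝ E]
    (Q : Set E) (hQ : Convex ℝ Q)
    (d : E → ℝ) (D : E → E →L[ℝ] ℝ)
    (hdiff : ∀ w ∈ Q, HasFDerivAt d (D w) w)
    (a b : E) (ha : a ∈ Q) (hb : b ∈ Q)
    (p : E →L[ℝ] ℝ)
    (hmin : ∀ u ∈ Q, p b + (d b - d a - D a (b - a)) ≤ p u + (d u - d a - D a (u - a)))
    (u : E) (hu : u ∈ Q) :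
    0 ≤ p (u - b) + D b (u - b) - D a (u - b) := by
  set γ : ℝ → E := fun t => b + t • (u - b) with hγdef
  have hmem : ∀ t ∈ Icc (0:ℝ) 1, γ t ∈ Q := fun t ht => hQ.add_smul_sub_mem hb hu ht
  have hγ : HasDerivAt γ (u - b) 0 := by
    simpa [hγdef] using ((hasDerivAt_id (0:ℝ)).smul_const (u - b)).const_add b
  have hγ0 : γ 0 = b := by simp [hγdef]
  set ψ : ℝ → ℝ := fun t => p (γ t) + d (γ t) - D a (γ t - a) with hψdef
  have hψ' : HasDerivAt ψ (p (u - b) + D b (u - b) - D a (u - b)) 0 := by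
    have h1 : HasDerivAt (fun t => p (γ t)) (p (u - b)) 0 :=
      (p.hasFDerivAt).comp_hasDerivAt 0 hγ
    have h2 : HasDerivAt (fun t => d (γ t)) (D b (u - b)) 0 := by
      have hd' : HasFDerivAt d (D b) (γ 0) := hγ0 ▸ hdiff b hb
      exact hd'.comp_hasDerivAt 0 hγ
    have h3 : HasDerivAt (fun t => (D a) (γ t - a)) (D a (u - b)) 0 :=
      ((D a).hasFDerivAt).comp_hasDerivAt 0 (hγ.sub_const a)
    exact (h1.add h2).sub h3
  have hkey : ∀ t ∈ Ioo (0:ℝ) 1, ψ 0 ≤ ψ t := by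
    intro t ht
    have hm := hmin (γ t) (hmem t (Ioo_subset_Icc_self ht))
    have : ψ 0 = p b + d b - D a (b - a) := by simp [hψdef, hγdef]
    rw [this, hψdef]
    dsimp only
    linarith
  have htend : Tendsto (slope ψ 0) (𝓝[>] (0:ℝ)) (𝓝 (p (u - b) + D b (u - b) - D a (u - b))) :=
    (hasDerivAt_iff_tendsto_slope.mp hψ').mono_left
      (nhdsWithin_mono _ (fun x hx => ne_of_gt hx))
  have hev : ∀ᶠ t in 𝓝[>] (0:ℝ), 0 ≤ slope ψ 0 t := by
    filter_upwards [Ioo_mem_nhdsGT (zero_lt_one : (0:ℝ) < 1)] with t ht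
    have := hkey t ht
    rw [slope_def_field]
    simp only [sub_zero]
    exact div_nonneg (by linarith) ht.1.le
  exact ge_of_tendsto htend hev

theorem nonadaptive_online_MD_regret {E : Type*} [NormedAddCommGroup E] [NormedSpace ℝ E]
    [FiniteDimensional ℝ E]
    (Q : Set E) (hQc : IsClosed Q) (hQ : Convex ℝ Q)
    (d : E → ℝ) (D : E → E →L[ℝ] ℝ)
    (hdiff : ∀ w ∈ Q, HasFDerivAt d (D w) w)
    (hstr : ∀ u ∈ Q, ∀ v ∈ Q, ‖u - v‖^2 ≤ (D u - D v) (u - v))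
    (V : E → E → ℝ) (hV : ∀ u v, V u v = d v - d u - D u (v - u))
    (N NJ : ℕ) (hN : 0 < N)
    (M ε Θ : ℝ) (hM : 0 < M) (hε : 0 < ε) (hΘ : 0 < Θ)
    (f : Fin N → E → ℝ) (g : E → ℝ)
    (hfconv : ∀ i, ConvexOn ℝ Q (f i)) (hgconv : ConvexOn ℝ Q g)
    (hflip : ∀ i, ∀ u ∈ Q, ∀ v ∈ Q, |f i u - f i v| ≤ M * ‖u - v‖)
    (hglip : ∀ u ∈ Q, ∀ v ∈ Q, |g u - g v| ≤ M * ‖u - v‖)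
    (xs : E) (hxs : xs ∈ Q) (hgxs : g xs ≤ 0)
    (x : ℕ → E) (hxQ : ∀ k, x k ∈ Q)
    (hΘ0 : V (x 0) xs ≤ Θ^2)
    (h : ℝ) (hhdef : h = ε / M^2)
    (prodSet : Finset ℕ)
    (hprod : ∀ k, k ∈ prodSet ↔ (k < N + NJ ∧ g (x k) ≤ ε))
    (hcard : prodSet.card = N)
    (idx : ℕ → Fin N) (hidx : Set.BijOn idx ↑prodSet Set.univ)
    (q : ℕ → E →L[ℝ] ℝ)
    (hq_prod : ∀ k ∈ prodSet,
      (∀ u ∈ Q, f (idx k) (x k) + q k (u - x k) ≤ f (idx k) u) ∧ ‖q k‖ ≤ M)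
    (hq_nonprod : ∀ k < N + NJ, k ∉ prodSet →
      (∀ u ∈ Q, g (x k) + q k (u - x k) ≤ g u) ∧ ‖q k‖ ≤ M)
    (hstep : ∀ k < N + NJ, ∀ u ∈ Q,
      h * q k (x (k+1)) + V (x k) (x (k+1)) ≤ h * q k u + V (x k) u) :
    ∑ k ∈ prodSet, (f (idx k) (x k) - f (idx k) xs)
      ≤ ε * N / 2 + M^2 * Θ^2 / ε - ε * NJ / 2 := by
  have hh : 0 < h := hhdef ▸ div_pos hε (pow_pos hM 2)
  have hVlb := aux_Vlb Q hQ d D hdiff hstr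
  -- per-step key inequality
  have key : ∀ k < N + NJ,
      h * q k (x k - xs) ≤ h^2 * M^2 / 2 + (V (x k) xs - V (x (k+1)) xs) := by
    intro k hk
    set a := x k
    set b := x (k + 1)
    have hqM : ‖q k‖ ≤ M := by
      by_cases hkp : k ∈ prodSet
      · exact (hq_prod k hkp).2
      · exact (hq_nonprod k hk hkp).2
    -- first-order optimality with p = h • q k
    have hfoc : 0 ≤ (h • q k) (xs - b) + D b (xs - b) - D a (xs - b) := by
      apply aux_foc Q hQ d D hdiff a b (hxQ k) (hxQ (k+1)) (h • q k) _ xs hxs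
      intro u hu
      have := hstep k hk u hu
      rw [hV a b, hV a u] at this
      simpa [ContinuousLinearMap.smul_apply, smul_eq_mul] using this
    have hfoc' : h * q k (b - xs) ≤ D b (xs - b) - D a (xs - b) := by
      have e1 : (h • q k) (xs - b) = h * q k (xs - b) := by
        simp [ContinuousLinearMap.smul_apply, smul_eq_mul]
      have e2 : q k (xs - b) = -(q k (b - xs)) := by rw [← map_neg]; congr 1; abel
      rw [e1, e2] at hfoc
      linarith
    -- three-point identity
    have h3pt : D b (xs - b) - D a (xs - b) = V a xs - V a b - V b xs := by
      rw [hV a xs, hV a b, hV b xs]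
      have e : (D a) (xs - a) - (D a) (b - a) = (D a) (xs - b) := by
        rw [← map_sub]; congr 1; abel
      linarith
    -- bound on the step term
    have hstep_bd : h * q k (a - b) ≤ h * (M * ‖a - b‖) := by
      have h1 : q k (a - b) ≤ ‖q k‖ * ‖a - b‖ := by
        calc q k (a - b) ≤ |q k (a - b)| := le_abs_self _
          _ = ‖q k (a - b)‖ := (Real.norm_eq_abs _).symm
          _ ≤ ‖q k‖ * ‖a - b‖ := (q k).le_opNorm _
      have h2 : ‖q k‖ * ‖a - b‖ ≤ M * ‖a - b‖ :=
        mul_le_mul_of_nonneg_right hqM (norm_nonneg _)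
      exact mul_le_mul_of_nonneg_left (h1.trans h2) hh.le
    have hVab : ‖b - a‖^2 / 2 ≤ V a b := by
      rw [hV a b]; exact hVlb a (hxQ k) b (hxQ (k+1))
    have hsplit : q k (a - xs) = q k (a - b) + q k (b - xs) := by
      rw [← map_add]; congr 1; abel
    have hnorm : ‖b - a‖ = ‖a - b‖ := norm_sub_rev _ _
    rw [hnorm] at hVab
    have : h * q k (a - xs) = h * q k (a - b) + h * q k (b - xs) := by
      rw [hsplit]; ring
    rw [this]
    nlinarith [sq_nonneg (h * M - ‖a - b‖), h3pt, hfoc', hstep_bd, hVab]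
  -- summation
  set T := Finset.range (N + NJ) with hT
  have hsub : prodSet ⊆ T := fun k hk => Finset.mem_range.mpr ((hprod k).mp hk).1
  have htele : ∑ k ∈ T, (V (x k) xs - V (x (k+1)) xs) = V (x 0) xs - V (x (N+NJ)) xs := by
    rw [hT]; exact Finset.sum_range_sub' (fun k => V (x k) xs) (N + NJ)
  have hVend : 0 ≤ V (x (N+NJ)) xs := by
    rw [hV]
    have := hVlb (x (N+NJ)) (hxQ _) xs hxs
    nlinarith [sq_nonneg ‖xs - x (N+NJ)‖]
  have hsumT : ∑ k ∈ T, h * q k (x k - xs) ≤ (N + NJ : ℝ) * (h^2 * M^2 / 2) + Θ^2 := by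
    calc ∑ k ∈ T, h * q k (x k - xs)
        ≤ ∑ k ∈ T, (h^2 * M^2 / 2 + (V (x k) xs - V (x (k+1)) xs)) := by
          apply Finset.sum_le_sum
          intro k hk
          exact key k (Finset.mem_range.mp hk)
      _ = (N + NJ : ℝ) * (h^2 * M^2 / 2) + (V (x 0) xs - V (x (N+NJ)) xs) := by
          rw [Finset.sum_add_distrib, htele, Finset.sum_const, Finset.card_range,
            nsmul_eq_mul, Nat.cast_add]
      _ ≤ (N + NJ : ℝ) * (h^2 * M^2 / 2) + Θ^2 := by linarith
  -- split into productive and non-productive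
  have hcard2 : (T \ prodSet).card = NJ := by
    rw [Finset.card_sdiff_of_subset hsub, Finset.card_range, hcard]
    omega
  have hnonprod_lb : ∀ k ∈ T \ prodSet, h * ε ≤ h * q k (x k - xs) := by
    intro k hk
    obtain ⟨hkT, hkp⟩ := Finset.mem_sdiff.mp hk
    have hklt := Finset.mem_range.mp hkT
    have hg : ε < g (x k) := by
      by_contra hcon
      exact hkp ((hprod k).mpr ⟨hklt, le_of_not_gt hcon⟩)
    have hsg := (hq_nonprod k hklt hkp).1 xs hxs
    have e : q k (xs - x k) = -(q k (x k - xs)) := by rw [← map_neg]; congr 1; abel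
    rw [e] at hsg
    have : ε ≤ q k (x k - xs) := by linarith
    exact mul_le_mul_of_nonneg_left this hh.le
  have hsum_nonprod : (NJ : ℝ) * (h * ε) ≤ ∑ k ∈ T \ prodSet, h * q k (x k - xs) := by
    have := Finset.card_nsmul_le_sum (T \ prodSet) (fun k => h * q k (x k - xs)) (h * ε)
      hnonprod_lb
    rwa [hcard2, nsmul_eq_mul] at this
  have hprod_ub : ∀ k ∈ prodSet,
      h * (f (idx k) (x k) - f (idx k) xs) ≤ h * q k (x k - xs) := by
    intro k hk
    have hsg := (hq_prod k hk).1 xs hxs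
    have e : q k (xs - x k) = -(q k (x k - xs)) := by rw [← map_neg]; congr 1; abel
    rw [e] at hsg
    have : f (idx k) (x k) - f (idx k) xs ≤ q k (x k - xs) := by linarith
    exact mul_le_mul_of_nonneg_left this hh.le
  have hsplitT : ∑ k ∈ T \ prodSet, h * q k (x k - xs) + ∑ k ∈ prodSet, h * q k (x k - xs)
      = ∑ k ∈ T, h * q k (x k - xs) := Finset.sum_sdiff hsub
  have hmain : h * ∑ k ∈ prodSet, (f (idx k) (x k) - f (idx k) xs)
      ≤ (N + NJ : ℝ) * (h^2 * M^2 / 2) + Θ^2 - (NJ : ℝ) * (h * ε) := by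
    have h1 : h * ∑ k ∈ prodSet, (f (idx k) (x k) - f (idx k) xs)
        = ∑ k ∈ prodSet, h * (f (idx k) (x k) - f (idx k) xs) := Finset.mul_sum _ _ _
    have h2 : ∑ k ∈ prodSet, h * (f (idx k) (x k) - f (idx k) xs)
        ≤ ∑ k ∈ prodSet, h * q k (x k - xs) := Finset.sum_le_sum hprod_ub
    linarith
  -- finish by arithmetic
  subst hhdef
  have hGB : (ε / M^2) * (ε * N / 2 + M^2 * Θ^2 / ε - ε * NJ / 2)
      = (N + NJ : ℝ) * ((ε / M^2)^2 * M^2 / 2) + Θ^2 - (NJ : ℝ) * (ε / M^2 * ε) := by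
    field_simp
    ring
  rw [← hGB] at hmain
  exact le_of_mul_le_mul_left hmain hh
end

section
/- For $1 < p \leq 2$, the function $d(x) = \frac{1}{2(p-1)} \|x\|_p^2$ is 1-strongly convex on $\mathbb{R}^n$ with respect to the $\ell_p$-norm. -/
open scoped NNReal ENNReal
open Real Set Finset Filter

lemma aux_base {p : ℝ} (hp1 : 1 < p) (hp2 : p ≤ 2) {s : ℝ} (hs0 : 0 ≤ s) (hs1 : s < 1) :
    2 ≤ (1+s) ^ (p-2) + (1-s) ^ (p-2) := by
  set e : ℝ := (p-2)/2 with he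
  have h1 : (0:ℝ) < 1 + s := by linarith
  have h2 : (0:ℝ) < 1 - s := by linarith
  have ha : (1+s) ^ (p-2) = ((1+s) ^ e) ^ 2 := by
    rw [← Real.rpow_natCast ((1+s)^e) 2, ← Real.rpow_mul h1.le]
    norm_num [he]
  have hb : (1-s) ^ (p-2) = ((1-s) ^ e) ^ 2 := by
    rw [← Real.rpow_natCast ((1-s)^e) 2, ← Real.rpow_mul h2.le]
    norm_num [he]
  have key : 2 * ((1+s)^e * (1-s)^e) ≤ ((1+s)^e)^2 + ((1-s)^e)^2 := by
    have := two_mul_le_add_sq ((1+s)^e) ((1-s)^e)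
    linarith
  have hmul : (1+s)^e * (1-s)^e = ((1+s)*(1-s)) ^ e := (Real.mul_rpow h1.le h2.le).symm
  have hprod : (0:ℝ) < (1+s)*(1-s) := by nlinarith
  have hle1 : (1+s)*(1-s) ≤ 1 := by nlinarith
  have hone : 1 ≤ ((1+s)*(1-s)) ^ e := by
    apply Real.one_le_rpow_of_pos_of_le_one_of_nonpos hprod hle1
    rw [he]; linarith
  rw [ha, hb]
  calc (2:ℝ) ≤ 2 * (((1+s)*(1-s)) ^ e) := by linarith
    _ = 2 * ((1+s)^e * (1-s)^e) := by rw [hmul]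
    _ ≤ _ := key

lemma aux_g {p : ℝ} (hp1 : 1 < p) (hp2 : p ≤ 2) {t : ℝ} (ht0 : 0 ≤ t) (ht1 : t ≤ 1) :
    2*(p-1)*t ≤ (1+t) ^ (p-1) - (1-t) ^ (p-1) := by
  set g : ℝ → ℝ := fun s => (1+s) ^ (p-1) - (1-s) ^ (p-1) - 2*(p-1)*s with hg
  have hderiv : ∀ s ∈ Ioo (0:ℝ) 1, HasDerivAt g
      ((p-1)*(1+s)^(p-2) + (p-1)*(1-s)^(p-2) - 2*(p-1)) s := by
    intro s hs
    have h1 : (0:ℝ) < 1 + s := by linarith [hs.1]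
    have h2 : (0:ℝ) < 1 - s := by linarith [hs.2]
    have d1 : HasDerivAt (fun x : ℝ => (1+x) ^ (p-1)) ((p-1)*(1+s)^(p-1-1)*1) s := by
      exact (Real.hasDerivAt_rpow_const (Or.inl h1.ne')).comp s
        ((hasDerivAt_id s).const_add 1)
    have d2 : HasDerivAt (fun x : ℝ => (1-x) ^ (p-1)) ((p-1)*(1-s)^(p-1-1)*(-1)) s := by
      exact (Real.hasDerivAt_rpow_const (Or.inl h2.ne')).comp s
        ((hasDerivAt_id s).neg.const_add 1)
    have d3 : HasDerivAt (fun x : ℝ => 2*(p-1)*x) (2*(p-1)) s := by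
      simpa using (hasDerivAt_id s).const_mul (2*(p-1))
    have := (d1.sub d2).sub d3
    refine this.congr_deriv ?_
    ring_nf
  have hcont : ContinuousOn g (Icc 0 1) := by
    apply ContinuousOn.sub
    apply ContinuousOn.sub
    · exact ((Real.continuous_rpow_const (by linarith)).comp
        (continuous_const.add continuous_id)).continuousOn
    · exact ((Real.continuous_rpow_const (by linarith)).comp
        (continuous_const.sub continuous_id)).continuousOn
    · exact (continuous_const.mul continuous_id).continuousOn
  have hmono : MonotoneOn g (Icc 0 1) := by
    apply monotoneOn_of_deriv_nonneg (convex_Icc 0 1) hcont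
    · rw [interior_Icc]
      exact fun s hs => ((hderiv s hs).differentiableAt).differentiableWithinAt
    · rw [interior_Icc]
      intro s hs
      rw [(hderiv s hs).deriv]
      have := aux_base hp1 hp2 (le_of_lt hs.1) hs.2
      nlinarith [this, sub_pos.2 hp1]
  have h0 : g 0 = 0 := by simp [hg]
  have := hmono (show (0:ℝ) ∈ Icc (0:ℝ) 1 by constructor <;> norm_num)
    (show t ∈ Icc (0:ℝ) 1 from ⟨ht0, ht1⟩) ht0
  rw [h0] at this
  simp only [hg] at this
  linarith

lemma aux_h {p : ℝ} (hp1 : 1 < p) (hp2 : p ≤ 2) {t : ℝ} (ht0 : 0 ≤ t) (ht1 : t ≤ 1) :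
    2 + p*(p-1)*t^2 ≤ (1+t) ^ p + (1-t) ^ p := by
  set h : ℝ → ℝ := fun s => (1+s) ^ p + (1-s) ^ p - 2 - p*(p-1)*s^2 with hh
  have hderiv : ∀ s ∈ Ioo (0:ℝ) 1, HasDerivAt h
      (p*(1+s)^(p-1) - p*(1-s)^(p-1) - 2*p*(p-1)*s) s := by
    intro s hs
    have h1 : (0:ℝ) < 1 + s := by linarith [hs.1]
    have h2 : (0:ℝ) < 1 - s := by linarith [hs.2]
    have d1 : HasDerivAt (fun x : ℝ => (1+x) ^ p) (p*(1+s)^(p-1)*1) s :=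
      (Real.hasDerivAt_rpow_const (Or.inl h1.ne')).comp s ((hasDerivAt_id s).const_add 1)
    have d2 : HasDerivAt (fun x : ℝ => (1-x) ^ p) (p*(1-s)^(p-1)*(-1)) s :=
      (Real.hasDerivAt_rpow_const (Or.inl h2.ne')).comp s ((hasDerivAt_id s).neg.const_add 1)
    have d3 : HasDerivAt (fun x : ℝ => p*(p-1)*x^2) (p*(p-1)*(2*s)) s := by
      simpa using ((hasDerivAt_pow 2 s).const_mul (p*(p-1)))
    have := ((d1.add d2).sub_const 2).sub d3
    refine this.congr_deriv ?_
    ring_nf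
  have hcont : ContinuousOn h (Icc 0 1) := by
    have c1 : Continuous fun s : ℝ => (1+s) ^ p := (Real.continuous_rpow_const (by linarith)).comp
      (continuous_const.add continuous_id)
    have c2 : Continuous fun s : ℝ => (1-s) ^ p := (Real.continuous_rpow_const (by linarith)).comp
      (continuous_const.sub continuous_id)
    exact (((c1.add c2).sub continuous_const).sub
      ((continuous_const.mul (continuous_pow 2)))).continuousOn
  have hmono : MonotoneOn h (Icc 0 1) := by
    apply monotoneOn_of_deriv_nonneg (convex_Icc 0 1) hcont
    · rw [interior_Icc]
      exact fun s hs => ((hderiv s hs).differentiableAt).differentiableWithinAt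
    · rw [interior_Icc]
      intro s hs
      rw [(hderiv s hs).deriv]
      have := aux_g hp1 hp2 (le_of_lt hs.1) (le_of_lt hs.2)
      nlinarith [this, (by linarith : (0:ℝ) < p)]
  have h0 : h 0 = 0 := by simp [hh]; norm_num
  have := hmono (show (0:ℝ) ∈ Icc (0:ℝ) 1 by constructor <;> norm_num)
    (show t ∈ Icc (0:ℝ) 1 from ⟨ht0, ht1⟩) ht0
  rw [h0] at this
  simp only [hh] at this
  linarith

lemma star0 {p : ℝ} (hp1 : 1 < p) (hp2 : p ≤ 2) {t : ℝ} (ht0 : 0 ≤ t) (ht1 : t ≤ 1) :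
    (1+(p-1)*t^2) ^ (p/2) ≤ ((1+t) ^ p + (1-t) ^ p)/2 := by
  have h1 : (1+(p-1)*t^2) ^ (p/2) ≤ 1 + (p/2)*((p-1)*t^2) := by
    apply rpow_one_add_le_one_add_mul_self (by nlinarith) (by linarith) (by linarith)
  have h2 := aux_h hp1 hp2 ht0 ht1
  linarith

-- star for 0 ≤ t ≤ s
lemma star_aux {p : ℝ} (hp1 : 1 < p) (hp2 : p ≤ 2) {s t : ℝ} (ht0 : 0 ≤ t) (hts : t ≤ s) :
    (s^2+(p-1)*t^2) ^ (p/2) ≤ ((s+t) ^ p + (s-t) ^ p)/2 := by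
  have hs0 : 0 ≤ s := le_trans ht0 hts
  rcases eq_or_lt_of_le hs0 with h0 | hs
  · have hteq : t = 0 := le_antisymm (by linarith) ht0
    subst hteq
    rw [← h0]
    norm_num
    rw [Real.zero_rpow (by positivity)]
    positivity
  · set r : ℝ := t/s with hr
    have hr0 : 0 ≤ r := div_nonneg ht0 hs0
    have hr1 : r ≤ 1 := by rw [hr, div_le_one hs]; exact hts
    have htr : t = s * r := by rw [hr]; field_simp [hs.ne']
    have key := star0 hp1 hp2 hr0 hr1
    have hsp : (0:ℝ) < s ^ p := Real.rpow_pos_of_pos hs p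
    have lhs_eq : (s^2+(p-1)*t^2) ^ (p/2) = s ^ p * (1+(p-1)*r^2) ^ (p/2) := by
      have : s^2+(p-1)*t^2 = s^2 * (1+(p-1)*r^2) := by rw [htr]; ring
      rw [this, Real.mul_rpow (by positivity) (by nlinarith)]
      congr 1
      rw [← Real.rpow_natCast s 2, ← Real.rpow_mul hs0]
      congr 1
      ring
    have rhs1 : (s+t) ^ p = s ^ p * (1+r) ^ p := by
      rw [htr, (by ring : s + s*r = s*(1+r)), Real.mul_rpow hs0 (by linarith)]
    have rhs2 : (s-t) ^ p = s ^ p * (1-r) ^ p := by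
      rw [htr, (by ring : s - s*r = s*(1-r)), Real.mul_rpow hs0 (by linarith)]
    rw [lhs_eq, rhs1, rhs2]
    calc s ^ p * (1+(p-1)*r^2) ^ (p/2) ≤ s ^ p * (((1+r) ^ p + (1-r) ^ p)/2) := by
          exact mul_le_mul_of_nonneg_left key hsp.le
      _ = (s ^ p * (1+r) ^ p + s ^ p * (1-r) ^ p)/2 := by ring

-- star for nonneg s t
lemma star_nonneg {p : ℝ} (hp1 : 1 < p) (hp2 : p ≤ 2) {s t : ℝ} (hs0 : 0 ≤ s) (ht0 : 0 ≤ t) :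
    (s^2+(p-1)*t^2) ^ (p/2) ≤ ((s+t) ^ p + |s-t| ^ p)/2 := by
  rcases le_total t s with h | h
  · rw [abs_of_nonneg (by linarith)]
    exact star_aux hp1 hp2 ht0 h
  · rw [abs_of_nonpos (by linarith)]
    have hst := star_aux hp1 hp2 hs0 h
    have e1 : -(s-t) = t - s := by ring
    rw [e1, add_comm s t]
    refine le_trans ?_ hst
    apply Real.rpow_le_rpow (by nlinarith) ?_ (by linarith)
    nlinarith [mul_nonneg (by linarith : (0:ℝ) ≤ 2-p) (by nlinarith : (0:ℝ) ≤ t^2-s^2)]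

lemma star {p : ℝ} (hp1 : 1 < p) (hp2 : p ≤ 2) (s t : ℝ) :
    (s^2+(p-1)*t^2) ^ (p/2) ≤ (|s+t| ^ p + |s-t| ^ p)/2 := by
  rcases le_total 0 s with hs | hs <;> rcases le_total 0 t with ht | ht
  · rw [abs_of_nonneg (by linarith)]
    exact star_nonneg hp1 hp2 hs ht
  · -- s ≥ 0, t ≤ 0
    have := star_nonneg hp1 hp2 hs (neg_nonneg.2 ht)
    have e1 : |s+t| = |s - -t| := by ring_nf
    have e2 : |s-t| = s + -t := by rw [abs_of_nonneg (by linarith)]; ring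
    have e3 : (s^2+(p-1)*t^2) = (s^2+(p-1)*(-t)^2) := by ring
    rw [e1, e2, e3, add_comm (|s - -t| ^ p)]
    exact this
  · -- s ≤ 0, t ≥ 0
    have := star_nonneg hp1 hp2 (neg_nonneg.2 hs) ht
    have e1 : |s+t| = |(-s) - t| := by rw [← abs_neg]; ring_nf
    have e2 : |s-t| = -s + t := by rw [abs_of_nonpos (by linarith)]; ring
    have e3 : (s^2+(p-1)*t^2) = ((-s)^2+(p-1)*t^2) := by ring
    rw [e1, e2, e3, add_comm (|(-s) - t| ^ p)]
    exact this
  · -- both ≤ 0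
    have := star_nonneg hp1 hp2 (neg_nonneg.2 hs) (neg_nonneg.2 ht)
    have e1 : |s+t| = -s + -t := by rw [← abs_neg, abs_of_nonneg (by linarith)]; ring
    have e2 : |s-t| = |-s - -t| := by rw [← abs_neg]; ring_nf
    have e3 : (s^2+(p-1)*t^2) = ((-s)^2+(p-1)*(-t)^2) := by ring
    rw [e1, e2, e3]
    exact this

-- reverse Minkowski step: P^r + Q'^r ≤ S^r
lemma rev_mink {p : ℝ} (hp1 : 1 < p) (hp2 : p ≤ 2) {n : ℕ} (x y : Fin n → ℝ) :
    (∑ i, |x i| ^ p) ^ (2/p) + (p-1) * (∑ i, |y i| ^ p) ^ (2/p)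
      ≤ (∑ i, ((x i)^2 + (p-1)*(y i)^2) ^ (p/2)) ^ (2/p) := by
  set r : ℝ := 2/p with hr
  have hp0 : (0:ℝ) < p := by linarith
  have hr1 : (1:ℝ) ≤ r := by rw [hr, le_div_iff₀ hp0]; linarith
  have hr0 : (0:ℝ) < r := by linarith
  haveI : Fact ((1:ℝ≥0∞) ≤ ENNReal.ofReal r) := ⟨by
    rw [ENNReal.one_le_ofReal]; exact hr1⟩
  have htr : (ENNReal.ofReal r).toReal = r := ENNReal.toReal_ofReal hr0.le
  set w : Fin n → PiLp (ENNReal.ofReal r) (fun _ : Fin 2 => ℝ) :=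
    fun i => (WithLp.equiv (ENNReal.ofReal r) (Fin 2 → ℝ)).symm
      ![ |x i| ^ p, (p-1) ^ (p/2) * |y i| ^ p ] with hw
  have hppos : (0:ℝ) < p - 1 := by linarith
  have hnorm_wi : ∀ i, ‖w i‖ = ((x i)^2 + (p-1)*(y i)^2) ^ (p/2) := by
    intro i
    rw [PiLp.norm_eq_sum (by rw [htr]; exact hr0)]
    rw [htr]
    have e0 : ∀ j : Fin 2, ‖w i j‖ = w i j := by
      intro j
      fin_cases j
      · exact Real.norm_of_nonneg (show (0:ℝ) ≤ |x i| ^ p by positivity)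
      · exact Real.norm_of_nonneg
          (show (0:ℝ) ≤ (p-1) ^ (p/2) * |y i| ^ p by positivity)
    rw [Fin.sum_univ_two, e0 0, e0 1]
    have ew0 : w i 0 = |x i| ^ p := rfl
    have ew1 : w i 1 = (p-1) ^ (p/2) * |y i| ^ p := rfl
    rw [ew0, ew1]
    have a1 : (|x i| ^ p) ^ r = (x i)^2 := by
      rw [← Real.rpow_mul (abs_nonneg _), hr]
      rw [(by field_simp : p * (2/p) = 2)]
      rw [Real.rpow_two, sq_abs]
    have a2 : ((p-1) ^ (p/2) * |y i| ^ p) ^ r = (p-1)*(y i)^2 := by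
      rw [Real.mul_rpow (by positivity) (by positivity),
        ← Real.rpow_mul hppos.le, ← Real.rpow_mul (abs_nonneg _), hr]
      rw [(by field_simp : p/2 * (2/p) = 1), (by field_simp : p * (2/p) = 2)]
      rw [Real.rpow_one, Real.rpow_two, sq_abs]
    rw [a1, a2]
    rw [show (1:ℝ)/r = p/2 by rw [hr]; field_simp]
  have tri : ‖∑ i, w i‖ ≤ ∑ i, ‖w i‖ := norm_sum_le _ _
  have hsum_coord : ∀ j : Fin 2, (∑ i, w i) j = ∑ i, w i j := by
    intro j
    rw [WithLp.ofLp_sum]; exact Finset.sum_apply j univ _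
  have hnorm_sum : ‖∑ i, w i‖
      = ((∑ i, |x i| ^ p) ^ r + ((p-1) ^ (p/2) * ∑ i, |y i| ^ p) ^ r) ^ (1/r) := by
    rw [PiLp.norm_eq_sum (by rw [htr]; exact hr0), htr, Fin.sum_univ_two]
    rw [hsum_coord 0, hsum_coord 1]
    have e0 : ∀ i, w i 0 = |x i| ^ p := fun i => rfl
    have e1 : ∀ i, w i 1 = (p-1) ^ (p/2) * |y i| ^ p := fun i => rfl
    simp_rw [e0, e1]
    rw [← Finset.mul_sum]
    congr 2
    · rw [Real.norm_of_nonneg (by positivity)]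
    · rw [Real.norm_of_nonneg (by positivity)]
  -- combine
  have key : ((∑ i, |x i| ^ p) ^ r + ((p-1) ^ (p/2) * ∑ i, |y i| ^ p) ^ r) ^ (1/r)
      ≤ ∑ i, ((x i)^2 + (p-1)*(y i)^2) ^ (p/2) := by
    rw [← hnorm_sum]
    calc ‖∑ i, w i‖ ≤ ∑ i, ‖w i‖ := tri
      _ = _ := by simp_rw [hnorm_wi]
  have hS : (0:ℝ) ≤ ∑ i, ((x i)^2 + (p-1)*(y i)^2) ^ (p/2) := by
    apply Finset.sum_nonneg; intro i _; positivity
  have lifted := Real.rpow_le_rpow (by positivity) key hr0.le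
  rw [← Real.rpow_mul (by positivity), one_div, inv_mul_cancel₀ hr0.ne', Real.rpow_one]
    at lifted
  refine le_trans (le_of_eq ?_) lifted
  rw [Real.mul_rpow (by positivity) (by positivity), ← Real.rpow_mul hppos.le,
    (by rw [hr]; field_simp : p/2 * r = 1), Real.rpow_one]

lemma sum_bcl {p : ℝ} (hp1 : 1 < p) (hp2 : p ≤ 2) {n : ℕ} (x y : Fin n → ℝ) :
    (∑ i, |x i| ^ p) ^ (2/p) + (p-1) * (∑ i, |y i| ^ p) ^ (2/p)
      ≤ (∑ i, (|x i + y i| ^ p + |x i - y i| ^ p)/2) ^ (2/p) := by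
  refine le_trans (rev_mink hp1 hp2 x y) ?_
  apply Real.rpow_le_rpow
  · apply Finset.sum_nonneg; intro i _
    exact Real.rpow_nonneg (by nlinarith) _
  · apply Finset.sum_le_sum; intro i _
    exact star hp1 hp2 (x i) (y i)
  · exact div_nonneg (by norm_num) (by linarith)

lemma norm_sq_eq {n : ℕ} {p : ℝ≥0} [Fact (1 ≤ (p:ℝ≥0∞))] (hp1 : 1 < (p:ℝ))
    (u : PiLp p (fun _ : Fin n => ℝ)) :
    ‖u‖^2 = (∑ i, |u i| ^ (p:ℝ)) ^ (2/(p:ℝ)) := by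
  have hq : (0:ℝ) < (p:ℝ) := by linarith
  have ht : ((p:ℝ≥0∞)).toReal = (p:ℝ) := by simp
  rw [PiLp.norm_eq_sum (by rw [ht]; exact hq), ht]
  rw [← Real.rpow_natCast _ 2, ← Real.rpow_mul (by positivity)]
  simp_rw [Real.norm_eq_abs]
  congr 1
  field_simp
  norm_num

lemma midpoint_norm_sq {n : ℕ} {p : ℝ≥0} [Fact (1 ≤ (p:ℝ≥0∞))] (hp1 : 1 < (p:ℝ))
    (hp2 : (p:ℝ) ≤ 2) (u v : PiLp p (fun _ : Fin n => ℝ)) :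
    ‖(2:ℝ)⁻¹ • (u+v)‖^2 + ((p:ℝ)-1) * ‖(2:ℝ)⁻¹ • (u-v)‖^2 ≤ (‖u‖^2+‖v‖^2)/2 := by
  set q : ℝ := (p:ℝ) with hqdef
  have hq : (0:ℝ) < q := by linarith
  set x : Fin n → ℝ := fun i => (u i + v i)/2 with hx
  set y : Fin n → ℝ := fun i => (u i - v i)/2 with hy
  have bcl := sum_bcl hp1 hp2 x y
  have exy1 : ∀ i, x i + y i = u i := by intro i; rw [hx, hy]; ring
  have exy2 : ∀ i, x i - y i = v i := by intro i; rw [hx, hy]; ring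
  simp_rw [exy1, exy2] at bcl
  have e1 : ‖(2:ℝ)⁻¹ • (u+v)‖^2 = (∑ i, |x i| ^ q) ^ (2/q) := by
    rw [norm_sq_eq hp1]
    congr 1
    apply Finset.sum_congr rfl
    intro i _
    congr 1
    show |((2:ℝ)⁻¹ • (u+v)) i| = |x i|
    rw [PiLp.smul_apply, PiLp.add_apply, hx]
    congr 1
    simp [smul_eq_mul]
    ring
  have e2 : ‖(2:ℝ)⁻¹ • (u-v)‖^2 = (∑ i, |y i| ^ q) ^ (2/q) := by
    rw [norm_sq_eq hp1]
    congr 1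
    apply Finset.sum_congr rfl
    intro i _
    congr 1
    show |((2:ℝ)⁻¹ • (u-v)) i| = |y i|
    rw [PiLp.smul_apply, PiLp.sub_apply, hy]
    congr 1
    simp [smul_eq_mul]
    ring
  have eu : ‖u‖^2 = (∑ i, |u i| ^ q) ^ (2/q) := norm_sq_eq hp1 u
  have ev : ‖v‖^2 = (∑ i, |v i| ^ q) ^ (2/q) := norm_sq_eq hp1 v
  rw [e1, e2, eu, ev]
  refine le_trans bcl ?_
  -- power mean step
  have hsum : ∑ i, (|u i| ^ q + |v i| ^ q)/2 = ((∑ i, |u i| ^ q) + ∑ i, |v i| ^ q)/2 := by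
    rw [← Finset.sum_add_distrib, ← Finset.sum_div]
  rw [hsum]
  have hNu : (0:ℝ) ≤ ∑ i, |u i| ^ q := by apply Finset.sum_nonneg; intro i _; positivity
  have hNv : (0:ℝ) ≤ ∑ i, |v i| ^ q := by apply Finset.sum_nonneg; intro i _; positivity
  have hr1 : (1:ℝ) ≤ 2/q := by rw [le_div_iff₀ hq]; linarith
  have pm := Real.rpow_arith_mean_le_arith_mean_rpow (Finset.univ : Finset (Fin 2))
    ![1/2, 1/2] ![∑ i, |u i| ^ q, ∑ i, |v i| ^ q]
    (by intro i _; fin_cases i <;> norm_num)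
    (by norm_num [Fin.sum_univ_two])
    (by intro i _; fin_cases i
        · simpa using hNu
        · simpa using hNv)
    hr1
  have pm' : ((1/2)*(∑ i, |u i| ^ q) + (1/2)*(∑ i, |v i| ^ q)) ^ (2/q)
      ≤ (1/2)*(∑ i, |u i| ^ q) ^ (2/q) + (1/2)*(∑ i, |v i| ^ q) ^ (2/q) := by
    simpa [Fin.sum_univ_two] using pm
  have ebase : ((∑ i, |u i| ^ q) + ∑ i, |v i| ^ q)/2
      = (1/2)*(∑ i, |u i| ^ q) + (1/2)*(∑ i, |v i| ^ q) := by ring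
  rw [ebase]
  linarith

lemma midpoint_convexOn {φ : ℝ → ℝ} (hc : Continuous φ)
    (hm : ∀ s t : ℝ, φ ((s+t)/2) ≤ (φ s + φ t)/2) : ConvexOn ℝ Set.univ φ := by
  refine ⟨convex_univ, fun x _ y _ a b ha hb hab => ?_⟩
  -- θ c := c * φ x + (1-c) * φ y - φ (c•x + (1-c)•y), show θ ≥ 0 on [0,1]
  set θ : ℝ → ℝ := fun c => c * φ x + (1-c) * φ y - φ (c*x + (1-c)*y) with hθ
  have hθcont : Continuous θ := by
    apply Continuous.sub
    · exact (continuous_id.mul continuous_const).add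
        ((continuous_const.sub continuous_id).mul continuous_const)
    · exact hc.comp ((continuous_id.mul continuous_const).add
        ((continuous_const.sub continuous_id).mul continuous_const))
  have hθmid : ∀ s t : ℝ, (θ s + θ t)/2 ≤ θ ((s+t)/2) := by
    intro s t
    have key := hm (s*x + (1-s)*y) (t*x + (1-t)*y)
    have e : (s*x + (1-s)*y + (t*x + (1-t)*y))/2 = ((s+t)/2)*x + (1-(s+t)/2)*y := by ring
    rw [e] at key
    simp only [hθ]
    linarith
  have hdy : ∀ m : ℕ, ∀ k : ℕ, k ≤ 2^m → 0 ≤ θ ((k:ℝ)/2^m) := by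
    intro m
    induction m with
    | zero =>
      intro k hk
      interval_cases k
      · simpa [hθ] using le_refl (0:ℝ)
      · norm_num [hθ]
    | succ m ih =>
      intro k hk
      set i : ℕ := k/2 with hi
      set j : ℕ := k - i with hj
      have hij : i + j = k := by omega
      have hi2 : i ≤ 2^m := by omega
      have hj2 : j ≤ 2^m := by
        have : 2^(m+1) = 2^m + 2^m := by ring
        omega
      have e : ((k:ℝ))/2^(m+1) = ((i:ℝ)/2^m + (j:ℝ)/2^m)/2 := by
        rw [← hij]
        push_cast
        ring
      rw [e]
      have := hθmid ((i:ℝ)/2^m) ((j:ℝ)/2^m)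
      have h1 := ih i hi2
      have h2 := ih j hj2
      linarith
  -- density
  have hnonneg : ∀ c : ℝ, 0 ≤ c → c ≤ 1 → 0 ≤ θ c := by
    intro c hc0 hc1
    set seq : ℕ → ℝ := fun m => (⌊c * 2^m⌋₊ : ℝ)/2^m with hseq
    have hk2 : ∀ m : ℕ, ⌊c * 2^m⌋₊ ≤ 2^m := by
      intro m
      calc ⌊c * 2^m⌋₊ ≤ ⌊(2:ℝ)^m⌋₊ := by
            apply Nat.floor_le_floor
            nlinarith [pow_pos (by norm_num : (0:ℝ) < 2) m]
        _ = 2^m := by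
            rw [show ((2:ℝ)^m) = ((2^m : ℕ) : ℝ) by push_cast; ring, Nat.floor_natCast]
    have hlb : ∀ m : ℕ, c - (1/2)^m ≤ seq m := by
      intro m
      have h2m : (0:ℝ) < 2^m := pow_pos (by norm_num) m
      have hfl : c * 2^m - 1 ≤ (⌊c * 2^m⌋₊ : ℝ) := (Nat.sub_one_lt_floor (c * 2^m)).le
      show c - (1/2)^m ≤ (⌊c * 2^m⌋₊ : ℝ)/2^m
      rw [le_div_iff₀ h2m]
      calc (c - (1/2)^m) * 2^m = c * 2^m - 1 := by
            rw [sub_mul]; congr 1; rw [← mul_pow]; norm_num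
        _ ≤ _ := hfl
    have hub : ∀ m : ℕ, seq m ≤ c := by
      intro m
      have h2m : (0:ℝ) < 2^m := pow_pos (by norm_num) m
      rw [hseq, div_le_iff₀ h2m]
      exact Nat.floor_le (by positivity)
    have htend : Tendsto seq atTop (nhds c) := by
      have h1 : Tendsto (fun m : ℕ => c - (1/2)^m) atTop (nhds c) := by
        have : Tendsto (fun m : ℕ => (1/2:ℝ)^m) atTop (nhds 0) :=
          tendsto_pow_atTop_nhds_zero_of_lt_one (by norm_num) (by norm_num)
        simpa using (tendsto_const_nhds (x := c)).sub this
      exact tendsto_of_tendsto_of_tendsto_of_le_of_le h1 tendsto_const_nhds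
        (fun m => hlb m) (fun m => hub m)
    have hθtend : Tendsto (fun m => θ (seq m)) atTop (nhds (θ c)) :=
      (hθcont.continuousAt.tendsto).comp htend
    refine ge_of_tendsto hθtend (Eventually.of_forall ?_)
    intro m
    exact hdy m _ (hk2 m)
  have hfin := hnonneg a ha (by linarith)
  simp only [hθ] at hfin
  rw [show (1:ℝ) - a = b by linarith] at hfin
  simp only [smul_eq_mul]
  linarith

theorem lp_dgf_strongly_convex (n : ℕ) (p : ℝ≥0) (hp1 : 1 < (p:ℝ)) (hp2 : (p:ℝ) ≤ 2)
    [Fact (1 ≤ (p : ℝ≥0∞))] :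
    StrongConvexOn Set.univ 1
      (fun x : PiLp p (fun _ : Fin n => ℝ) => ‖x‖^2 / (2*((p:ℝ)-1))) := by
  set q : ℝ := (p:ℝ) with hqdef
  have hq1 : (0:ℝ) < q - 1 := by linarith
  refine ⟨convex_univ, fun x _ y _ a b ha hb hab => ?_⟩
  set C : ℝ := ‖y - x‖^2 with hC
  set φt : ℝ → ℝ := fun t => ‖x + t • (y - x)‖^2 - (q-1) * C * t^2 with hφt
  have hcont : Continuous φt := by
    apply Continuous.sub
    · exact (continuous_norm.comp
        (continuous_const.add (continuous_id.smul continuous_const))).pow 2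
    · exact continuous_const.mul (continuous_pow 2)
  have hmid : ∀ s t : ℝ, φt ((s+t)/2) ≤ (φt s + φt t)/2 := by
    intro s t
    set u : PiLp p (fun _ : Fin n => ℝ) := x + s • (y - x) with hu
    set v : PiLp p (fun _ : Fin n => ℝ) := x + t • (y - x) with hv
    have ms := midpoint_norm_sq hp1 hp2 u v
    have emid : x + ((s+t)/2) • (y - x) = (2:ℝ)⁻¹ • (u + v) := by
      rw [hu, hv]; module
    have ediff : u - v = (s - t) • (y - x) := by rw [hu, hv]; module
    have habs : ‖(2:ℝ)⁻¹ • (u - v)‖^2 = (s-t)^2 * C / 4 := by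
      rw [ediff, smul_smul, norm_smul]
      rw [Real.norm_eq_abs, mul_pow, sq_abs, hC]
      ring
    rw [habs] at ms
    have iden : (q-1) * C * (((s+t)/2)^2) =
        (q-1) * C * ((s^2 + t^2)/2) - (q-1) * ((s-t)^2 * C / 4) := by ring
    simp only [hφt]
    rw [emid]
    linarith
  have cv := midpoint_convexOn hcont hmid
  have key := cv.2 (mem_univ (0:ℝ)) (mem_univ (1:ℝ)) ha hb hab
  have e0 : φt 0 = ‖x‖^2 := by simp [hφt]
  have e1 : φt 1 = ‖y‖^2 - (q-1) * C := by
    have exy : x + (1:ℝ) • (y - x) = y := by module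
    simp only [hφt, exy, one_pow, mul_one]
  have eb : a • (0:ℝ) + b • (1:ℝ) = b := by simp
  rw [eb, e0, e1] at key
  have ebv : x + b • (y - x) = a • x + b • y := by
    have : a = 1 - b := by linarith
    rw [this]; module
  simp only [hφt, ebv, smul_eq_mul] at key
  -- key : ‖a•x+b•y‖^2 - (q-1)*C*b^2 ≤ a*‖x‖^2 + b*(‖y‖^2 - (q-1)*C)
  have idab : (q-1)*(a*b)*C = (q-1)*C*b - (q-1)*C*b^2 := by
    rw [show a = 1 - b from by linarith]; ring
  have key2 : ‖a • x + b • y‖^2 ≤ a*‖x‖^2 + b*‖y‖^2 - (q-1)*(a*b)*C := by linarith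
  have hCxy : ‖x - y‖^2 = C := by rw [hC, norm_sub_rev]
  simp only [smul_eq_mul]
  rw [hCxy]
  have h2q : (0:ℝ) < 2*(q-1) := by linarith
  have expand : a*(‖x‖^2/(2*(q-1))) + b*(‖y‖^2/(2*(q-1))) - a*b*(1/2*C)
      = (a*‖x‖^2 + b*‖y‖^2 - (q-1)*(a*b)*C)/(2*(q-1)) := by
    field_simp
  calc ‖a • x + b • y‖^2/(2*(q-1))
      ≤ (a*‖x‖^2 + b*‖y‖^2 - (q-1)*(a*b)*C)/(2*(q-1)) := by
        apply div_le_div_of_nonneg_right key2 h2q.le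
    _ = _ := expand.symm
end

section
/- Let $f_1, \dots, f_N, g$ be convex $M$-Lipschitz functions on a closed convex set $Q$, $x_* \in Q$ with $g(x_*) \leq 0$ and $d(x_*) \leq \Theta_0^2$. Suppose the adaptive algorithm produces productive steps (where $g(x^k) \leq \varepsilon$) with $M_k = \|\nabla f_{i(k)}(x^k)\|_*$ and non-productive steps (where $g(x^k) > \varepsilon$) with $M_k = \|\nabla g(x^k)\|_*$, stepsizes $h_k = \Theta_0(\sum_{t=0}^k M_t^2)^{-1/2}$, and updates $x^{k+1} = \mathrm{Mirr}_{x^k}(h_k q_k)$ with $q_k$ the corresponding subgradient. If $N$ productive and $N_J$ non-productive steps occur, then $\sum_{\text{productive } k}(f_{i(k)}(x^k) - f_{i(k)}(x_*)) < \varepsilon N - \varepsilon(N + N_J) + 2\Theta_0\left(\sum_{k=0}^{N+N_J-1} M_k^2\right)^{1/2}$. -/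
open Filter Set Topology

lemma bregman_lower {E : Type*} [NormedAddCommGroup E] [NormedSpace ℝ E]
    {Q : Set E} (hQ : Convex ℝ Q)
    {d : E → ℝ} {D : E → E →L[ℝ] ℝ}
    (hdiff : ∀ w ∈ Q, HasFDerivAt d (D w) w)
    (hstr : ∀ u ∈ Q, ∀ v ∈ Q, ‖u - v‖^2 ≤ (D u - D v) (u - v))
    {u v : E} (hu : u ∈ Q) (hv : v ∈ Q) :
    ‖v - u‖^2 / 2 ≤ d v - d u - D u (v - u) := by
  set c := v - u with hc
  have hmem : ∀ t ∈ Set.Icc (0:ℝ) 1, u + t • c ∈ Q := fun t ht => hQ.add_smul_sub_mem hu hv ht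
  set ψ : ℝ → ℝ := fun t => d (u + t • c) - t * (D u c) - t^2/2 * ‖c‖^2 with hψ
  have hder : ∀ t ∈ Set.Icc (0:ℝ) 1,
      HasDerivAt ψ ((D (u + t • c)) c - D u c - t * ‖c‖^2) t := by
    intro t ht
    have hγd : HasDerivAt (fun t : ℝ => u + t • c) c t := by
      simpa using ((hasDerivAt_id t).smul_const c).const_add u
    have h1 : HasDerivAt (fun t => d (u + t • c)) ((D (u + t • c)) c) t :=
      (hdiff _ (hmem t ht)).comp_hasDerivAt t hγd
    have h2 : HasDerivAt (fun t : ℝ => t * (D u c)) (D u c) t := by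
      simpa using (hasDerivAt_id t).mul_const (D u c)
    have h3 : HasDerivAt (fun t : ℝ => t^2/2 * ‖c‖^2) (2 * t ^ 1 / 2 * ‖c‖^2) t :=
      ((hasDerivAt_pow 2 t).div_const 2).mul_const _
    have h4 := (h1.sub h2).sub h3
    exact h4.congr_deriv (by ring)
  have hmono : MonotoneOn ψ (Set.Icc 0 1) := by
    apply monotoneOn_of_deriv_nonneg (convex_Icc 0 1)
    · exact fun t ht => (hder t ht).continuousAt.continuousWithinAt
    · intro t ht
      rw [interior_Icc] at ht
      exact ((hder t (Set.mem_Icc_of_Ioo ht)).differentiableAt).differentiableWithinAt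
    · intro t ht
      rw [interior_Icc] at ht
      rw [(hder t (Set.mem_Icc_of_Ioo ht)).deriv]
      have h5 := hstr (u + t • c) (hmem t (Set.mem_Icc_of_Ioo ht)) u hu
      have hgu : u + t • c - u = t • c := by abel
      rw [hgu, norm_smul] at h5
      simp only [ContinuousLinearMap.sub_apply, map_smul, smul_eq_mul, Real.norm_eq_abs] at h5
      have ht0 : 0 < t := ht.1
      rw [abs_of_pos ht0] at h5
      nlinarith
  have h01 := hmono (Set.mem_Icc.2 ⟨le_refl 0, zero_le_one⟩) (Set.mem_Icc.2 ⟨zero_le_one, le_refl 1⟩) zero_le_one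
  have e0 : ψ 0 = d u := by simp [hψ]
  have e1 : ψ 1 = d v - D u c - ‖c‖^2 / 2 := by
    have huv : u + c = v := by simp [hc]
    simp [hψ, huv]
    ring
  rw [e0, e1] at h01
  linarith

lemma deriv_nonneg_of_right_min {φ : ℝ → ℝ} {a : ℝ} (hd : HasDerivAt φ a 0)
    (hmin : ∀ t ∈ Set.Icc (0:ℝ) 1, φ 0 ≤ φ t) : 0 ≤ a := by
  have h1 : Tendsto (slope φ 0) (𝓝[>] 0) (𝓝 a) :=
    (hasDerivAt_iff_tendsto_slope.1 hd).mono_left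
      (nhdsWithin_mono _ fun t ht => by simpa using ne_of_gt ht)
  refine ge_of_tendsto h1 ?_
  filter_upwards [Ioc_mem_nhdsGT_of_mem (Set.mem_Ico.2 ⟨le_refl 0, one_pos⟩)] with t ht
  rw [slope_def_field]
  apply div_nonneg (sub_nonneg.2 (hmin t (Set.mem_Icc.2 ⟨le_of_lt ht.1, ht.2⟩)))
  simpa using le_of_lt ht.1

lemma sum_div_sqrt (a : ℕ → ℝ) (n : ℕ) (hpos : ∀ k < n, 0 < a k) :
    ∀ m, 1 ≤ m → m ≤ n →
      ∑ k ∈ Finset.range m, a k / Real.sqrt (∑ t ∈ Finset.range (k+1), a t)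
        ≤ 2 * Real.sqrt (∑ t ∈ Finset.range m, a t) - Real.sqrt (a 0) := by
  intro m
  induction m with
  | zero => omega
  | succ m ih =>
    intro _ hmn
    rcases Nat.eq_zero_or_pos m with hm0 | hm1
    · subst hm0
      have h0 : 0 < a 0 := hpos 0 (by omega)
      rw [Finset.sum_range_one, Finset.sum_range_one, Real.div_sqrt]
      linarith
    · have hSm : 0 < ∑ t ∈ Finset.range m, a t :=
        Finset.sum_pos (fun t ht => hpos t (by have := Finset.mem_range.1 ht; omega))
          (Finset.nonempty_range_iff.2 (by omega))
      have ham : 0 < a m := hpos m (by omega)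
      have hSm1 : 0 < ∑ t ∈ Finset.range (m+1), a t := by
        rw [Finset.sum_range_succ]; linarith
      have key : a m / Real.sqrt (∑ t ∈ Finset.range (m+1), a t)
          ≤ 2 * Real.sqrt (∑ t ∈ Finset.range (m+1), a t) - 2 * Real.sqrt (∑ t ∈ Finset.range m, a t) := by
        set s := ∑ t ∈ Finset.range m, a t
        set s' := ∑ t ∈ Finset.range (m+1), a t with hs'
        have hss : s' = s + a m := Finset.sum_range_succ a m
        have hsq : 0 < Real.sqrt s' := Real.sqrt_pos.2 hSm1
        rw [div_le_iff₀ hsq]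
        have e1 : Real.sqrt s' ^ 2 = s' := Real.sq_sqrt (le_of_lt hSm1)
        have e2 : Real.sqrt s ^ 2 = s := Real.sq_sqrt (le_of_lt hSm)
        nlinarith [sq_nonneg (Real.sqrt s' - Real.sqrt s), Real.sqrt_nonneg s, Real.sqrt_nonneg s']
      rw [Finset.sum_range_succ]
      have := ih hm1 (by omega)
      linarith

lemma tele_bound (a b : ℕ → ℝ) (C : ℝ) (n : ℕ)
    (ha0 : ∀ k ≤ n, 0 ≤ a k) (haC : ∀ k ≤ n, a k ≤ C)
    (hb : ∀ k, b k ≤ b (k+1)) (hbpos : ∀ k, 0 ≤ b k) :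
    ∀ m, 1 ≤ m → m ≤ n →
      ∑ k ∈ Finset.range m, b k * (a k - a (k+1)) ≤ b (m-1) * (C - a m) := by
  intro m
  induction m with
  | zero => omega
  | succ m ih =>
    intro _ hmn
    rcases Nat.eq_zero_or_pos m with hm0 | hm1
    · subst hm0
      rw [Finset.sum_range_one]
      have := haC 0 (by omega)
      have := hbpos 0
      simp only [Nat.add_sub_cancel]
      nlinarith
    · have hih := ih hm1 (by omega)
      rw [Finset.sum_range_succ]
      have hbm : b (m-1) ≤ b m := by
        have := hb (m-1)
        rwa [Nat.sub_add_cancel hm1] at this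
      have hCm : 0 ≤ C - a m := by have := haC m (by omega); linarith
      have h1 : b (m-1) * (C - a m) ≤ b m * (C - a m) :=
        mul_le_mul_of_nonneg_right hbm hCm
      simp only [Nat.add_sub_cancel]
      nlinarith

theorem adaptive_online_MD_regret {E : Type*} [NormedAddCommGroup E] [NormedSpace ℝ E]
    [FiniteDimensional ℝ E]
    (Q : Set E) (hQc : IsClosed Q) (hQ : Convex ℝ Q)
    (d : E → ℝ) (D : E → E →L[ℝ] ℝ)
    (hdiff : ∀ w ∈ Q, HasFDerivAt d (D w) w)
    (hstr : ∀ u ∈ Q, ∀ v ∈ Q, ‖u - v‖^2 ≤ (D u - D v) (u - v))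
    (V : E → E → ℝ) (hV : ∀ u v, V u v = d v - d u - D u (v - u))
    (N NJ : ℕ) (hN : 0 < N)
    (M ε Θ : ℝ) (hM : 0 < M) (hε : 0 < ε) (hΘ : 0 < Θ)
    (f : Fin N → E → ℝ) (g : E → ℝ)
    (hfconv : ∀ i, ConvexOn ℝ Q (f i)) (hgconv : ConvexOn ℝ Q g)
    (hflip : ∀ i, ∀ u ∈ Q, ∀ v ∈ Q, |f i u - f i v| ≤ M * ‖u - v‖)
    (hglip : ∀ u ∈ Q, ∀ v ∈ Q, |g u - g v| ≤ M * ‖u - v‖)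
    (xs : E) (hxs : xs ∈ Q) (hgxs : g xs ≤ 0) (hdxs : d xs ≤ Θ^2)
    (x : ℕ → E) (hxQ : ∀ k, x k ∈ Q)
    (hVb : ∀ k ≤ N + NJ, V (x k) xs ≤ Θ^2)
    (prodSet : Finset ℕ)
    (hprod : ∀ k, k ∈ prodSet ↔ (k < N + NJ ∧ g (x k) ≤ ε))
    (hcard : prodSet.card = N)
    (idx : ℕ → Fin N) (hidx : Set.BijOn idx ↑prodSet Set.univ)
    (q : ℕ → E →L[ℝ] ℝ)
    (hq_prod : ∀ k ∈ prodSet, ∀ u ∈ Q, f (idx k) (x k) + q k (u - x k) ≤ f (idx k) u)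
    (hq_nonprod : ∀ k < N + NJ, k ∉ prodSet → ∀ u ∈ Q, g (x k) + q k (u - x k) ≤ g u)
    (Mk : ℕ → ℝ) (hMk : ∀ k < N + NJ, Mk k = ‖q k‖)
    (hMkpos : ∀ k < N + NJ, 0 < Mk k)
    (h : ℕ → ℝ)
    (hh : ∀ k, h k = Θ / Real.sqrt (∑ t ∈ Finset.range (k+1), (Mk t)^2))
    (hstep : ∀ k < N + NJ, ∀ u ∈ Q,
      h k * q k (x (k+1)) + V (x k) (x (k+1)) ≤ h k * q k u + V (x k) u) :
    ∑ k ∈ prodSet, (f (idx k) (x k) - f (idx k) xs)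
      < ε * N - ε * (N + NJ)
        + 2 * Θ * Real.sqrt (∑ k ∈ Finset.range (N + NJ), (Mk k)^2) := by
  have hn1 : 1 ≤ N + NJ := by omega
  have hSpos : ∀ k, k < N + NJ → (0:ℝ) < ∑ t ∈ Finset.range (k+1), (Mk t)^2 := by
    intro k hk
    apply Finset.sum_pos'
    · intro t _; positivity
    · exact ⟨0, Finset.mem_range.2 (by omega), by
        have := hMkpos 0 (by omega); positivity⟩
  have hSn : (0:ℝ) < ∑ t ∈ Finset.range (N + NJ), (Mk t)^2 := by
    have := hSpos (N + NJ - 1) (by omega)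
    rwa [Nat.sub_add_cancel hn1] at this
  have hhpos : ∀ k, k < N + NJ → 0 < h k := by
    intro k hk
    rw [hh k]
    exact div_pos hΘ (Real.sqrt_pos.2 (hSpos k hk))
  have hVnn : ∀ a ∈ Q, ∀ b ∈ Q, 0 ≤ V a b := by
    intro a ha b hb
    have hbl := bregman_lower hQ hdiff hstr ha hb
    rw [hV a b]
    nlinarith [sq_nonneg ‖b - a‖]
  -- key per-step inequality
  have key : ∀ k, k < N + NJ → q k (x k - xs)
      ≤ h k * (Mk k)^2 / 2
        + (Real.sqrt (∑ t ∈ Finset.range (k+1), (Mk t)^2) / Θ)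
            * (V (x k) xs - V (x (k+1)) xs) := by
    intro k hk
    have hfoc : 0 ≤ D (x (k+1)) (xs - x (k+1))
        + (h k * q k (xs - x (k+1)) - D (x k) (xs - x (k+1))) := by
      set c := xs - x (k+1) with hc
      set A := h k * q k c - D (x k) c with hA
      have hγ0 : x (k+1) + (0:ℝ) • c = x (k+1) := by simp
      have hγd : HasDerivAt (fun t : ℝ => x (k+1) + t • c) c 0 := by
        simpa using ((hasDerivAt_id (0:ℝ)).smul_const c).const_add (x (k+1))
      have hFy : HasFDerivAt d (D (x (k+1))) (x (k+1) + (0:ℝ) • c) := by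
        rw [hγ0]; exact hdiff _ (hxQ (k+1))
      have hdd : HasDerivAt (fun t : ℝ => d (x (k+1) + t • c)) (D (x (k+1)) c) 0 :=
        hFy.comp_hasDerivAt 0 hγd
      have hψd : HasDerivAt (fun t : ℝ => d (x (k+1) + t • c) + t * A)
          (D (x (k+1)) c + A) 0 :=
        hdd.add (by simpa using (hasDerivAt_id (0:ℝ)).mul_const A)
      have hmin : ∀ t ∈ Set.Icc (0:ℝ) 1,
          (fun t : ℝ => d (x (k+1) + t • c) + t * A) 0
            ≤ (fun t : ℝ => d (x (k+1) + t • c) + t * A) t := by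
        intro t ht
        have hmemt : x (k+1) + t • c ∈ Q := hQ.add_smul_sub_mem (hxQ (k+1)) hxs ht
        have hst := hstep k hk (x (k+1) + t • c) hmemt
        rw [hV, hV] at hst
        have e1 : q k (x (k+1) + t • c) = q k (x (k+1)) + t * q k c := by
          rw [map_add, map_smul]; simp
        have e2 : D (x k) (x (k+1) + t • c - x k)
            = D (x k) (x (k+1) - x k) + t * D (x k) c := by
          rw [show x (k+1) + t • c - x k = (x (k+1) - x k) + t • c by abel, map_add, map_smul]
          simp
        rw [e1, e2] at hst
        show d (x (k+1) + (0:ℝ) • c) + 0 * A ≤ d (x (k+1) + t • c) + t * A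
        rw [hγ0, hA]
        nlinarith [hst]
      have := deriv_nonneg_of_right_min hψd hmin
      rw [hA] at this
      exact this
    have id3 : V (x k) xs - V (x (k+1)) xs - V (x k) (x (k+1))
        = D (x (k+1)) (xs - x (k+1)) - D (x k) (xs - x (k+1)) := by
      rw [hV, hV, hV]
      rw [show xs - x k = (xs - x (k+1)) + (x (k+1) - x k) by abel, map_add]
      ring
    have hqb : q k (x k - x (k+1)) ≤ ‖q k‖ * ‖x k - x (k+1)‖ :=
      le_trans (le_abs_self _) (by rw [← Real.norm_eq_abs]; exact (q k).le_opNorm _)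
    have hVxy : ‖x k - x (k+1)‖^2 / 2 ≤ V (x k) (x (k+1)) := by
      rw [hV, norm_sub_rev]
      exact bregman_lower hQ hdiff hstr (hxQ k) (hxQ (k+1))
    have hMkk : ‖q k‖ = Mk k := (hMk k hk).symm
    have hk0 : 0 ≤ h k := le_of_lt (hhpos k hk)
    have hmul : h k * q k (x k - xs)
        ≤ (h k)^2 * (Mk k)^2 / 2 + (V (x k) xs - V (x (k+1)) xs) := by
      have hidq : q k (x k - xs) = q k (x k - x (k+1)) - q k (xs - x (k+1)) := by
        rw [map_sub, map_sub, map_sub]; ring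
      have hyoung : h k * (‖q k‖ * ‖x k - x (k+1)‖)
          ≤ (h k)^2 * ‖q k‖^2 / 2 + ‖x k - x (k+1)‖^2 / 2 := by
        nlinarith [sq_nonneg (h k * ‖q k‖ - ‖x k - x (k+1)‖)]
      have h6 : h k * q k (x k - x (k+1)) ≤ h k * (‖q k‖ * ‖x k - x (k+1)‖) :=
        mul_le_mul_of_nonneg_left hqb hk0
      rw [hMkk] at hyoung h6
      rw [hidq]
      linarith [hfoc, id3, hVxy, hyoung, h6]
    have hsq : 0 < Real.sqrt (∑ t ∈ Finset.range (k+1), (Mk t)^2) :=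
      Real.sqrt_pos.2 (hSpos k hk)
    have hb1 : (Real.sqrt (∑ t ∈ Finset.range (k+1), (Mk t)^2) / Θ) * h k = 1 := by
      rw [hh k]
      field_simp
    have hbnn : 0 ≤ Real.sqrt (∑ t ∈ Finset.range (k+1), (Mk t)^2) / Θ := by positivity
    calc q k (x k - xs)
        = ((Real.sqrt (∑ t ∈ Finset.range (k+1), (Mk t)^2) / Θ) * h k) * q k (x k - xs) := by
          rw [hb1, one_mul]
      _ = (Real.sqrt (∑ t ∈ Finset.range (k+1), (Mk t)^2) / Θ) * (h k * q k (x k - xs)) := by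
          ring
      _ ≤ (Real.sqrt (∑ t ∈ Finset.range (k+1), (Mk t)^2) / Θ)
            * ((h k)^2 * (Mk k)^2 / 2 + (V (x k) xs - V (x (k+1)) xs)) :=
          mul_le_mul_of_nonneg_left hmul hbnn
      _ = ((Real.sqrt (∑ t ∈ Finset.range (k+1), (Mk t)^2) / Θ) * h k)
            * (h k * (Mk k)^2 / 2)
          + (Real.sqrt (∑ t ∈ Finset.range (k+1), (Mk t)^2) / Θ)
            * (V (x k) xs - V (x (k+1)) xs) := by ring
      _ = h k * (Mk k)^2 / 2
          + (Real.sqrt (∑ t ∈ Finset.range (k+1), (Mk t)^2) / Θ)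
            * (V (x k) xs - V (x (k+1)) xs) := by rw [hb1, one_mul]
  -- sum of stepsize terms
  have hM0pos : 0 < Mk 0 := hMkpos 0 (by omega)
  have hs1 : ∑ k ∈ Finset.range (N + NJ), h k * (Mk k)^2 / 2
      ≤ Θ * Real.sqrt (∑ t ∈ Finset.range (N + NJ), (Mk t)^2) - Θ * Mk 0 / 2 := by
    have hdiv := sum_div_sqrt (fun k => (Mk k)^2) (N + NJ)
      (fun k hk => pow_pos (hMkpos k hk) 2) (N + NJ) hn1 (le_refl _)
    have hM0 : Real.sqrt ((Mk 0)^2) = Mk 0 := Real.sqrt_sq (le_of_lt hM0pos)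
    rw [hM0] at hdiv
    have heq : ∀ k ∈ Finset.range (N + NJ), h k * (Mk k)^2 / 2
        = (Θ/2) * ((Mk k)^2 / Real.sqrt (∑ t ∈ Finset.range (k+1), (Mk t)^2)) := by
      intro k hk
      rw [hh k]
      ring
    rw [Finset.sum_congr rfl heq, ← Finset.mul_sum]
    have := mul_le_mul_of_nonneg_left hdiv (by positivity : (0:ℝ) ≤ Θ/2)
    linarith
  -- telescoping sum
  have hs2 : ∑ k ∈ Finset.range (N + NJ),
      (Real.sqrt (∑ t ∈ Finset.range (k+1), (Mk t)^2) / Θ) * (V (x k) xs - V (x (k+1)) xs)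
      ≤ Θ * Real.sqrt (∑ t ∈ Finset.range (N + NJ), (Mk t)^2) := by
    have hbmono : ∀ k, Real.sqrt (∑ t ∈ Finset.range (k+1), (Mk t)^2) / Θ
        ≤ Real.sqrt (∑ t ∈ Finset.range (k+1+1), (Mk t)^2) / Θ := by
      intro k
      have hsub : (∑ t ∈ Finset.range (k+1), (Mk t)^2) ≤ ∑ t ∈ Finset.range (k+1+1), (Mk t)^2 := by
        apply Finset.sum_le_sum_of_subset_of_nonneg (Finset.range_subset_range.2 (Nat.le_succ _))
        intro i _ _
        positivity
      exact div_le_div_of_nonneg_right (Real.sqrt_le_sqrt hsub) hΘ.le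
    have hbnn : ∀ k, 0 ≤ Real.sqrt (∑ t ∈ Finset.range (k+1), (Mk t)^2) / Θ := by
      intro k; positivity
    have htel := tele_bound (fun k => V (x k) xs)
      (fun k => Real.sqrt (∑ t ∈ Finset.range (k+1), (Mk t)^2) / Θ) (Θ^2) (N + NJ)
      (fun k _ => hVnn (x k) (hxQ k) xs hxs) (fun k hk => hVb k hk)
      hbmono hbnn (N + NJ) hn1 (le_refl _)
    have hVnend : 0 ≤ V (x (N + NJ)) xs := hVnn (x (N + NJ)) (hxQ _) xs hxs
    have hbn : Real.sqrt (∑ t ∈ Finset.range (N + NJ - 1 + 1), (Mk t)^2) / Θ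
        = Real.sqrt (∑ t ∈ Finset.range (N + NJ), (Mk t)^2) / Θ := by
      rw [Nat.sub_add_cancel hn1]
    rw [hbn] at htel
    have hbnn' : 0 ≤ Real.sqrt (∑ t ∈ Finset.range (N + NJ), (Mk t)^2) / Θ := by positivity
    have hfin : Real.sqrt (∑ t ∈ Finset.range (N + NJ), (Mk t)^2) / Θ * Θ^2
        = Θ * Real.sqrt (∑ t ∈ Finset.range (N + NJ), (Mk t)^2) := by
      field_simp
    linarith [htel, hfin, mul_nonneg hbnn' hVnend]
  -- total sum bound
  have sumkey : ∑ k ∈ Finset.range (N + NJ), q k (x k - xs)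
      ≤ 2 * Θ * Real.sqrt (∑ t ∈ Finset.range (N + NJ), (Mk t)^2) - Θ * Mk 0 / 2 := by
    have h1 : ∑ k ∈ Finset.range (N + NJ), q k (x k - xs)
        ≤ ∑ k ∈ Finset.range (N + NJ),
            (h k * (Mk k)^2 / 2
              + (Real.sqrt (∑ t ∈ Finset.range (k+1), (Mk t)^2) / Θ)
                  * (V (x k) xs - V (x (k+1)) xs)) :=
      Finset.sum_le_sum (fun k hk => key k (Finset.mem_range.1 hk))
    rw [Finset.sum_add_distrib] at h1
    linarith
  -- split over productive / non-productive
  have hsubset : prodSet ⊆ Finset.range (N + NJ) :=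
    fun k hk => Finset.mem_range.2 ((hprod k).1 hk).1
  have hsplit := Finset.sum_sdiff (f := fun k => q k (x k - xs)) hsubset
  have hcard2 : (Finset.range (N + NJ) \ prodSet).card = NJ := by
    rw [Finset.card_sdiff_of_subset hsubset, Finset.card_range, hcard]
    omega
  have hnonprod : ∀ k ∈ Finset.range (N + NJ) \ prodSet, ε ≤ q k (x k - xs) := by
    intro k hk
    obtain ⟨hkr, hknp⟩ := Finset.mem_sdiff.1 hk
    have hkn := Finset.mem_range.1 hkr
    have hge : ε < g (x k) := by
      by_contra hle
      exact hknp ((hprod k).2 ⟨hkn, le_of_not_gt hle⟩)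
    have hq1 := hq_nonprod k hkn hknp xs hxs
    have e1 : q k (xs - x k) = q k xs - q k (x k) := map_sub _ _ _
    have e2 : q k (x k - xs) = q k (x k) - q k xs := map_sub _ _ _
    linarith
  have hNJb : ε * NJ ≤ ∑ k ∈ Finset.range (N + NJ) \ prodSet, q k (x k - xs) := by
    have := Finset.card_nsmul_le_sum (Finset.range (N + NJ) \ prodSet) _ ε hnonprod
    rw [hcard2] at this
    simpa [nsmul_eq_mul, mul_comm] using this
  have hprodb : ∑ k ∈ prodSet, (f (idx k) (x k) - f (idx k) xs)
      ≤ ∑ k ∈ prodSet, q k (x k - xs) := by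
    apply Finset.sum_le_sum
    intro k hk
    have hq1 := hq_prod k hk xs hxs
    have e1 : q k (xs - x k) = q k xs - q k (x k) := map_sub _ _ _
    have e2 : q k (x k - xs) = q k (x k) - q k xs := map_sub _ _ _
    linarith
  have hpos : 0 < Θ * Mk 0 / 2 := by positivity
  push_cast
  linarith [hprodb, hsplit, sumkey, hNJb, hpos]
end
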